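/- The unique solution of the initial value problem f'(t) = f(t)·(ln k − ln f(t))·P(t), f(t₀) = f₀ > 0, is f(t) = exp(ln k·(1 − e^{−(Q(t)−Q(t₀))}) + ln f₀·e^{−(Q(t)−Q(t₀))}). -/

import Mathlib

open Real Polynomial

/-- The unique positive solution of `f'(t) = f(t)·(ln k − ln f(t))·P(t)` on `[t₀, ∞)` with
`f(t₀) = f₀ > 0` is `f(t) = exp(ln k·(1 − e^{−(Q(t)−Q(t₀))}) + ln f₀·e^{−(Q(t)−Q(t₀))})`. -/
theorem stmt_3 (Q : Polynomial ℝ) (k t₀ f₀ : ℝ) (hk : 0 < k) (ht₀ : 0 ≤ t₀) (hf₀ : 0 < f₀)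
    (f : ℝ → ℝ)
    (hf : ∀ t, f t = Real.exp (Real.log k * (1 - Real.exp (-(Q.eval t - Q.eval t₀)))
        + Real.log f₀ * Real.exp (-(Q.eval t - Q.eval t₀)))) :
    (f t₀ = f₀ ∧ (∀ t, 0 < f t) ∧ ∀ t, t₀ ≤ t →
        HasDerivAt f (f t * (Real.log k - Real.log (f t)) * (Q.derivative.eval t)) t) ∧
    ∀ g : ℝ → ℝ, g t₀ = f₀ → (∀ t, t₀ ≤ t → 0 < g t) →
      (∀ t, t₀ ≤ t →
        HasDerivAt g (g t * (Real.log k - Real.log (g t)) * (Q.derivative.eval t)) t) →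
      ∀ t, t₀ ≤ t → g t = f t := by
  have hfe : f = fun t => Real.exp (Real.log k * (1 - Real.exp (-(Q.eval t - Q.eval t₀)))
      + Real.log f₀ * Real.exp (-(Q.eval t - Q.eval t₀))) := funext hf
  subst hfe
  set E : ℝ → ℝ := fun t => Real.exp (-(Q.eval t - Q.eval t₀)) with hEdef
  have hE : ∀ t, HasDerivAt E (-(Q.derivative.eval t) * E t) t := by
    intro t
    have h1 : HasDerivAt (fun t => -(Q.eval t - Q.eval t₀)) (-(Q.derivative.eval t)) t := by
      exact ((Q.hasDerivAt t).sub_const (Q.eval t₀)).neg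
    simpa [hEdef, mul_comm] using h1.exp
  have hA : ∀ t, HasDerivAt (fun t => Real.log k * (1 - E t) + Real.log f₀ * E t)
      ((Real.log k - Real.log f₀) * (Q.derivative.eval t * E t)) t := by
    intro t
    have h2 := (((hE t).const_sub 1).const_mul (Real.log k)).add ((hE t).const_mul (Real.log f₀))
    exact h2.congr_deriv (by ring)
  constructor
  · refine ⟨?_, fun t => Real.exp_pos _, fun t _ => ?_⟩
    · simp [Real.exp_log hf₀]
    · have h3 := (hA t).exp
      convert h3 using 1
      rw [Real.log_exp]
      ring
  · intro g hg0 hgpos hgd t ht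
    set F : ℝ → ℝ := fun s => (Real.log k - Real.log (g s)) * Real.exp (Q.eval s) with hFdef
    have hF : ∀ s, t₀ ≤ s → HasDerivAt F 0 s := by
      intro s hs
      have hgs := hgpos s hs
      have hlog : HasDerivAt (fun s => Real.log (g s))
          ((Real.log k - Real.log (g s)) * Q.derivative.eval s) s := by
        have := (hgd s hs).log hgs.ne'
        convert this using 1
        field_simp
      have hQ : HasDerivAt (fun s => Real.exp (Q.eval s))
          (Q.derivative.eval s * Real.exp (Q.eval s)) s := by
        simpa [mul_comm] using (Q.hasDerivAt s).exp
      have h4 := (hlog.const_sub (Real.log k)).mul hQ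
      exact h4.congr_deriv (by ring)
    have hconst : F t = F t₀ := by
      rcases eq_or_lt_of_le ht with h | h
      · rw [h]
      · have := constant_of_has_deriv_right_zero (f := F) (a := t₀) (b := t)
          (fun s hs => ((hF s hs.1).continuousAt.continuousWithinAt))
          (fun s hs => (hF s hs.1).hasDerivWithinAt)
        exact this t ⟨le_refl t₀ |>.trans ht, le_refl t⟩ |>.trans rfl
      
    have hgt := hgpos t ht
    have hlogeq : Real.log (g t) = Real.log k * (1 - E t) + Real.log f₀ * E t := by
      have hexp : Real.exp (Q.eval t) ≠ 0 := Real.exp_ne_zero _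
      have hconst' : (Real.log k - Real.log (g t)) * Real.exp (Q.eval t)
          = (Real.log k - Real.log f₀) * Real.exp (Q.eval t₀) := by
        simpa [hFdef, hg0] using hconst
      have hEt : E t = Real.exp (Q.eval t₀) / Real.exp (Q.eval t) := by
        rw [hEdef]
        rw [← Real.exp_sub]
        ring_nf
      rw [hEt]
      field_simp [hEt] at hconst' ⊢
      nlinarith [hconst']
    rw [← Real.exp_log hgt, hlogeq]
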